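/- The set-disjointness lower-bound graph G is connected, and its diameter equals 2 if a_i ≠ b_j for all i ∈ Fin α and j ∈ Fin β (a yes-instance of set-disjointness), and equals 3 if there exist i ∈ Fin α and j ∈ Fin β with a_i = b_j (a no-instance). -/
import Mathlib

namespace SetDisjointness

/-- Vertices of the set-disjointness lower-bound graph:
`uA i`, `vB j`, `wC m`, `xD m`, and the two special vertices `u*`, `v*`. -/
abbrev Vert (α β ℓ : ℕ) := (Fin α ⊕ Fin β) ⊕ ((Fin ℓ ⊕ Fin ℓ) ⊕ Bool)

variable {α β ℓ : ℕ}

def uA (i : Fin α) : Vert α β ℓ := Sum.inl (Sum.inl i)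
def vB (j : Fin β) : Vert α β ℓ := Sum.inl (Sum.inr j)
def wC (m : Fin ℓ) : Vert α β ℓ := Sum.inr (Sum.inl (Sum.inl m))
def xD (m : Fin ℓ) : Vert α β ℓ := Sum.inr (Sum.inl (Sum.inr m))
def ustar : Vert α β ℓ := Sum.inr (Sum.inr false)
def vstar : Vert α β ℓ := Sum.inr (Sum.inr true)

/-- One direction of the edge relation of the set-disjointness lower-bound graph:
`u_i ~ w_m` iff the `m`-th bit of `a_i` is 1; `u_i ~ x_m` iff it is 0;
`v_j ~ w_m` iff the `m`-th bit of `b_j` is 0; `v_j ~ x_m` iff it is 1;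
`u*` is adjacent to all of `V_A ∪ V_C ∪ V_D`; `v*` to all of `V_B ∪ V_C ∪ V_D`. -/
def sdRel (a : Fin α → Fin ℓ → Bool) (b : Fin β → Fin ℓ → Bool) :
    Vert α β ℓ → Vert α β ℓ → Prop
  | Sum.inl (Sum.inl i), Sum.inr (Sum.inl (Sum.inl m)) => a i m = true
  | Sum.inl (Sum.inl i), Sum.inr (Sum.inl (Sum.inr m)) => a i m = false
  | Sum.inl (Sum.inr j), Sum.inr (Sum.inl (Sum.inl m)) => b j m = false
  | Sum.inl (Sum.inr j), Sum.inr (Sum.inl (Sum.inr m)) => b j m = true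
  | Sum.inr (Sum.inr false), Sum.inl (Sum.inl _) => True
  | Sum.inr (Sum.inr false), Sum.inr (Sum.inl _) => True
  | Sum.inr (Sum.inr true), Sum.inl (Sum.inr _) => True
  | Sum.inr (Sum.inr true), Sum.inr (Sum.inl _) => True
  | _, _ => False

/-- The set-disjointness lower-bound graph. -/
def SDGraph (a : Fin α → Fin ℓ → Bool) (b : Fin β → Fin ℓ → Bool) :
    SimpleGraph (Vert α β ℓ) :=
  SimpleGraph.fromRel (sdRel a b)

section Aux

variable {V : Type*} {G : SimpleGraph V} {u v : V}

lemma le_edist' {k : ℕ} (h : ∀ p : G.Walk u v, k ≤ p.length) : (k : ℕ∞) ≤ G.edist u v :=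
  le_iInf fun p => by exact_mod_cast h p

lemma two_le_length (hne : u ≠ v) (hadj : ¬ G.Adj u v) (p : G.Walk u v) : 2 ≤ p.length := by
  cases p with
  | nil => exact absurd rfl hne
  | cons h q =>
    cases q with
    | nil => exact absurd h hadj
    | cons h' q' => simp [SimpleGraph.Walk.length_cons]

lemma three_le_length (hne : u ≠ v) (hadj : ¬ G.Adj u v)
    (hcom : ∀ c, G.Adj u c → ¬ G.Adj c v) (p : G.Walk u v) : 3 ≤ p.length := by
  cases p with
  | nil => exact absurd rfl hne
  | cons h q =>
    cases q with
    | nil => exact absurd h hadj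
    | cons h' q' =>
      cases q' with
      | nil => exact absurd h' (hcom _ h)
      | cons h'' q'' => simp [SimpleGraph.Walk.length_cons]

lemma edist_le_one_of_adj (h : G.Adj u v) : G.edist u v ≤ 1 :=
  le_of_eq (SimpleGraph.edist_eq_one_iff_adj.mpr h)

lemma edist_le_two_mid {c : V} (h1 : G.Adj u c) (h2 : G.Adj c v) : G.edist u v ≤ 2 := by
  have := SimpleGraph.edist_le (SimpleGraph.Walk.cons h1 h2.toWalk)
  simpa using this

lemma edist_le_two_cases (h : u = v ∨ G.Adj u v ∨ ∃ c, G.Adj u c ∧ G.Adj c v) :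
    G.edist u v ≤ 2 := by
  rcases h with rfl | h | ⟨c, h1, h2⟩
  · simp
  · exact (edist_le_one_of_adj h).trans (by norm_num)
  · exact edist_le_two_mid h1 h2

end Aux

variable {a : Fin α → Fin ℓ → Bool} {b : Fin β → Fin ℓ → Bool}

lemma adj_ustar_uA (i : Fin α) : (SDGraph a b).Adj ustar (uA i) := by
  simp [SDGraph, SimpleGraph.fromRel_adj, ustar, uA, sdRel]
lemma adj_vstar_vB (j : Fin β) : (SDGraph a b).Adj vstar (vB j) := by
  simp [SDGraph, SimpleGraph.fromRel_adj, vstar, vB, sdRel]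
lemma adj_ustar_wC (m : Fin ℓ) : (SDGraph a b).Adj ustar (wC m) := by
  simp [SDGraph, SimpleGraph.fromRel_adj, ustar, wC, sdRel]
lemma adj_ustar_xD (m : Fin ℓ) : (SDGraph a b).Adj ustar (xD m) := by
  simp [SDGraph, SimpleGraph.fromRel_adj, ustar, xD, sdRel]
lemma adj_vstar_wC (m : Fin ℓ) : (SDGraph a b).Adj vstar (wC m) := by
  simp [SDGraph, SimpleGraph.fromRel_adj, vstar, wC, sdRel]
lemma adj_vstar_xD (m : Fin ℓ) : (SDGraph a b).Adj vstar (xD m) := by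
  simp [SDGraph, SimpleGraph.fromRel_adj, vstar, xD, sdRel]
lemma adj_uA_wC {i : Fin α} {m : Fin ℓ} (h : a i m = true) : (SDGraph a b).Adj (uA i) (wC m) := by
  simp [SDGraph, SimpleGraph.fromRel_adj, uA, wC, sdRel, h]
lemma adj_uA_xD {i : Fin α} {m : Fin ℓ} (h : a i m = false) : (SDGraph a b).Adj (uA i) (xD m) := by
  simp [SDGraph, SimpleGraph.fromRel_adj, uA, xD, sdRel, h]
lemma adj_vB_wC {j : Fin β} {m : Fin ℓ} (h : b j m = false) : (SDGraph a b).Adj (vB j) (wC m) := by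
  simp [SDGraph, SimpleGraph.fromRel_adj, vB, wC, sdRel, h]
lemma adj_vB_xD {j : Fin β} {m : Fin ℓ} (h : b j m = true) : (SDGraph a b).Adj (vB j) (xD m) := by
  simp [SDGraph, SimpleGraph.fromRel_adj, vB, xD, sdRel, h]
lemma not_adj_ustar_vstar : ¬ (SDGraph a b).Adj (ustar : Vert α β ℓ) vstar := by
  simp [SDGraph, SimpleGraph.fromRel_adj, ustar, vstar, sdRel]
lemma not_adj_uA_vB (i : Fin α) (j : Fin β) : ¬ (SDGraph a b).Adj (uA i) (vB j) := by
  simp [SDGraph, SimpleGraph.fromRel_adj, uA, vB, sdRel]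

/-- A middle vertex between `uA i` and both hubs. -/
lemma exists_mid_u (hl : 1 ≤ ℓ) (i : Fin α) :
    ∃ c : Vert α β ℓ, (SDGraph a b).Adj (uA i) c ∧ (SDGraph a b).Adj ustar c ∧
      (SDGraph a b).Adj vstar c := by
  set m0 : Fin ℓ := ⟨0, hl⟩
  cases h : a i m0 with
  | true => exact ⟨wC m0, adj_uA_wC h, adj_ustar_wC m0, adj_vstar_wC m0⟩
  | false => exact ⟨xD m0, adj_uA_xD h, adj_ustar_xD m0, adj_vstar_xD m0⟩

lemma exists_mid_v (hl : 1 ≤ ℓ) (j : Fin β) :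
    ∃ c : Vert α β ℓ, (SDGraph a b).Adj (vB j) c ∧ (SDGraph a b).Adj ustar c ∧
      (SDGraph a b).Adj vstar c := by
  set m0 : Fin ℓ := ⟨0, hl⟩
  cases h : b j m0 with
  | true => exact ⟨xD m0, adj_vB_xD h, adj_ustar_xD m0, adj_vstar_xD m0⟩
  | false => exact ⟨wC m0, adj_vB_wC h, adj_ustar_wC m0, adj_vstar_wC m0⟩

/-- A common neighbor of `uA i` and `vB j` when `a i ≠ b j`. -/
lemma exists_mid_uv {i : Fin α} {j : Fin β} (h : a i ≠ b j) :
    ∃ c : Vert α β ℓ, (SDGraph a b).Adj (uA i) c ∧ (SDGraph a b).Adj c (vB j) := by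
  obtain ⟨m, hm⟩ := Function.ne_iff.mp h
  cases ha : a i m with
  | true =>
    have hb : b j m = false := by cases hb : b j m <;> simp_all
    exact ⟨wC m, adj_uA_wC ha, (adj_vB_wC hb).symm⟩
  | false =>
    have hb : b j m = true := by cases hb : b j m <;> simp_all
    exact ⟨xD m, adj_uA_xD ha, (adj_vB_xD hb).symm⟩

/-- Both hubs are within distance 2 of everything. -/
lemma hub_edist_le_two (hl : 1 ≤ ℓ) (t : Vert α β ℓ) :
    (SDGraph a b).edist ustar t ≤ 2 ∧ (SDGraph a b).edist vstar t ≤ 2 := by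
  set m0 : Fin ℓ := ⟨0, hl⟩
  rcases t with (i | j) | ((m | m) | (_ | _))
  · exact ⟨edist_le_two_cases (Or.inr (Or.inl (adj_ustar_uA i))),
      edist_le_two_cases (Or.inr (Or.inr (by
        obtain ⟨c, h1, _, h3⟩ := exists_mid_u (a := a) (b := b) hl i
        exact ⟨c, h3, h1.symm⟩)))⟩
  · exact ⟨edist_le_two_cases (Or.inr (Or.inr (by
        obtain ⟨c, h1, h2, _⟩ := exists_mid_v (a := a) (b := b) hl j
        exact ⟨c, h2, h1.symm⟩))),
      edist_le_two_cases (Or.inr (Or.inl (adj_vstar_vB j)))⟩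
  · exact ⟨edist_le_two_cases (Or.inr (Or.inl (adj_ustar_wC m))),
      edist_le_two_cases (Or.inr (Or.inl (adj_vstar_wC m)))⟩
  · exact ⟨edist_le_two_cases (Or.inr (Or.inl (adj_ustar_xD m))),
      edist_le_two_cases (Or.inr (Or.inl (adj_vstar_xD m)))⟩
  · exact ⟨edist_le_two_cases (Or.inl rfl),
      edist_le_two_cases (Or.inr (Or.inr ⟨wC m0, adj_vstar_wC m0, (adj_ustar_wC m0).symm⟩))⟩
  · exact ⟨edist_le_two_cases (Or.inr (Or.inr ⟨wC m0, adj_ustar_wC m0, (adj_vstar_wC m0).symm⟩)),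
      edist_le_two_cases (Or.inl rfl)⟩

/-- Every pair is within distance 3. -/
lemma edist_le_three (hl : 1 ≤ ℓ) (s t : Vert α β ℓ) :
    (SDGraph a b).edist s t ≤ 3 := by
  have tri : ∀ h : Vert α β ℓ, (SDGraph a b).edist s h ≤ 1 → (SDGraph a b).edist h t ≤ 2 →
      (SDGraph a b).edist s t ≤ 3 := fun h h1 h2 =>
    (SimpleGraph.edist_triangle (v := h)).trans
      (le_trans (add_le_add h1 h2) (by norm_num))
  rcases s with (i | j) | ((m | m) | (_ | _))
  · exact tri ustar (edist_le_one_of_adj (adj_ustar_uA i).symm) (hub_edist_le_two hl t).1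
  · exact tri vstar (edist_le_one_of_adj (adj_vstar_vB j).symm) (hub_edist_le_two hl t).2
  · exact tri ustar (edist_le_one_of_adj (adj_ustar_wC m).symm) (hub_edist_le_two hl t).1
  · exact tri ustar (edist_le_one_of_adj (adj_ustar_xD m).symm) (hub_edist_le_two hl t).1
  · exact (hub_edist_le_two hl t).1.trans (by norm_num)
  · exact (hub_edist_le_two hl t).2.trans (by norm_num)

/-- In a yes-instance every pair is within distance 2. -/
lemma edist_le_two_yes (hl : 1 ≤ ℓ) (hyes : ∀ (i : Fin α) (j : Fin β), a i ≠ b j)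
    (s t : Vert α β ℓ) : (SDGraph a b).edist s t ≤ 2 := by
  rcases s with (i | j) | ((m | m) | (_ | _))
  · -- s = uA i
    rcases t with (i' | j') | ((m' | m') | (_ | _))
    · exact edist_le_two_mid (adj_ustar_uA i).symm (adj_ustar_uA i')
    · obtain ⟨c, h1, h2⟩ := exists_mid_uv (hyes i j')
      exact edist_le_two_mid h1 h2
    · exact edist_le_two_mid (adj_ustar_uA i).symm (adj_ustar_wC m')
    · exact edist_le_two_mid (adj_ustar_uA i).symm (adj_ustar_xD m')
    · exact edist_le_two_cases (Or.inr (Or.inl (adj_ustar_uA i).symm))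
    · obtain ⟨c, h1, _, h3⟩ := exists_mid_u (a := a) (b := b) hl i
      exact edist_le_two_mid h1 h3.symm
  · -- s = vB j
    rcases t with (i' | j') | ((m' | m') | (_ | _))
    · obtain ⟨c, h1, h2⟩ := exists_mid_uv (hyes i' j)
      exact edist_le_two_mid h2.symm h1.symm
    · exact edist_le_two_mid (adj_vstar_vB j).symm (adj_vstar_vB j')
    · exact edist_le_two_mid (adj_vstar_vB j).symm (adj_vstar_wC m')
    · exact edist_le_two_mid (adj_vstar_vB j).symm (adj_vstar_xD m')
    · obtain ⟨c, h1, h2, _⟩ := exists_mid_v (a := a) (b := b) hl j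
      exact edist_le_two_mid h1 h2.symm
    · exact edist_le_two_cases (Or.inr (Or.inl (adj_vstar_vB j).symm))
  · -- s = wC m
    rcases t with (i' | j') | ((m' | m') | (_ | _))
    · exact edist_le_two_mid (adj_ustar_wC m).symm (adj_ustar_uA i')
    · exact edist_le_two_mid (adj_vstar_wC m).symm (adj_vstar_vB j')
    · exact edist_le_two_mid (adj_ustar_wC m).symm (adj_ustar_wC m')
    · exact edist_le_two_mid (adj_ustar_wC m).symm (adj_ustar_xD m')
    · exact edist_le_two_cases (Or.inr (Or.inl (adj_ustar_wC m).symm))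
    · exact edist_le_two_cases (Or.inr (Or.inl (adj_vstar_wC m).symm))
  · -- s = xD m
    rcases t with (i' | j') | ((m' | m') | (_ | _))
    · exact edist_le_two_mid (adj_ustar_xD m).symm (adj_ustar_uA i')
    · exact edist_le_two_mid (adj_vstar_xD m).symm (adj_vstar_vB j')
    · exact edist_le_two_mid (adj_ustar_xD m).symm (adj_ustar_wC m')
    · exact edist_le_two_mid (adj_ustar_xD m).symm (adj_ustar_xD m')
    · exact edist_le_two_cases (Or.inr (Or.inl (adj_ustar_xD m).symm))
    · exact edist_le_two_cases (Or.inr (Or.inl (adj_vstar_xD m).symm))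
  · exact (hub_edist_le_two hl t).1
  · exact (hub_edist_le_two hl t).2

/-- When `a i = b j`, the vertices `uA i` and `vB j` have no common neighbor. -/
lemma no_common_neighbor {i : Fin α} {j : Fin β} (hab : a i = b j) :
    ∀ c : Vert α β ℓ, (SDGraph a b).Adj (uA i) c → ¬ (SDGraph a b).Adj c (vB j) := by
  intro c h1 h2
  rcases c with (i' | j') | ((m | m) | (_ | _))
  · simp [SDGraph, SimpleGraph.fromRel_adj, uA, vB, sdRel] at h2
  · simp [SDGraph, SimpleGraph.fromRel_adj, uA, vB, sdRel] at h1
  · simp [SDGraph, SimpleGraph.fromRel_adj, uA, vB, wC, sdRel] at h1 h2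
    rw [hab] at h1
    simp [h1] at h2
  · simp [SDGraph, SimpleGraph.fromRel_adj, uA, vB, xD, sdRel] at h1 h2
    rw [hab] at h1
    simp [h1] at h2
  · simp [SDGraph, SimpleGraph.fromRel_adj, ustar, vB, sdRel] at h2
  · simp [SDGraph, SimpleGraph.fromRel_adj, uA, vstar, sdRel] at h1

/-- The set-disjointness lower-bound graph is connected; its diameter is `2` on
yes-instances (all `a_i ≠ b_j`) and `3` on no-instances (some `a_i = b_j`). -/
theorem sd_connected_and_diam (hl : 1 ≤ ℓ) (a : Fin α → Fin ℓ → Bool)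
    (b : Fin β → Fin ℓ → Bool) :
    (SDGraph a b).Connected ∧
      ((∀ (i : Fin α) (j : Fin β), a i ≠ b j) → (SDGraph a b).diam = 2) ∧
      ((∃ (i : Fin α) (j : Fin β), a i = b j) → (SDGraph a b).diam = 3) := by
  have hconn : (SDGraph a b).Connected := by
    rw [SimpleGraph.connected_iff]
    refine ⟨fun s t => ?_, ⟨ustar⟩⟩
    exact SimpleGraph.reachable_of_edist_ne_top
      (ne_top_of_le_ne_top (by simp) (edist_le_three hl s t))
  refine ⟨hconn, fun hyes => ?_, fun ⟨i, j, hab⟩ => ?_⟩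
  · have hed : (SDGraph a b).ediam = 2 := by
      refine le_antisymm (SimpleGraph.ediam_le_of_edist_le (edist_le_two_yes hl hyes)) ?_
      refine le_trans ?_ (SimpleGraph.edist_le_ediam (u := (ustar : Vert α β ℓ)) (v := vstar))
      exact le_edist' (two_le_length (by simp [ustar, vstar]) not_adj_ustar_vstar)
    rw [SimpleGraph.diam, hed]
    rfl
  · have hed : (SDGraph a b).ediam = 3 := by
      refine le_antisymm (SimpleGraph.ediam_le_of_edist_le (edist_le_three hl)) ?_
      refine le_trans ?_ (SimpleGraph.edist_le_ediam (u := uA i) (v := vB j))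
      exact le_edist' (three_le_length (by simp [uA, vB]) (not_adj_uA_vB i j)
        (no_common_neighbor hab))
    rw [SimpleGraph.diam, hed]
    rfl

end SetDisjointness
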